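/- There exist an irrational number ω ∈ (0,1) and constants C > 0 and τ ≥ 1 such that ω is (C,τ)-Diophantine, and yet for every T > 0 and every N ∈ ℕ there exists n ≥ N with M_n(ω) > e^{(κ+T)n}; in particular ω is Diophantine but belongs to no set KL⁺(T,N) and to no set KL'⁺(T,N). -/

import Mathlib

open Set

noncomputable section

/-- The Gauss map `G(x) = 1/x - ⌊1/x⌋`. -/
def gaussMap (x : ℝ) : ℝ := 1 / x - (⌊1 / x⌋ : ℝ)

/-- The `n`-th partial quotient `a_n(ω) = ⌊1 / G^{n-1}(ω)⌋` (for `n ≥ 1`). -/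
def pq (ω : ℝ) (n : ℕ) : ℤ := ⌊1 / (gaussMap^[n - 1] ω)⌋

/-- `M_n(ω) = a_1(ω) ⋯ a_n(ω)`. -/
def Mprod (ω : ℝ) (n : ℕ) : ℝ := ∏ j ∈ Finset.Icc 1 n, (pq ω j : ℝ)

/-- Khintchine's constant exponent `κ`. -/
def kappa : ℝ := ∫ x in Ioo (0 : ℝ) 1, Real.log (⌊1 / x⌋ : ℝ) / ((1 + x) * Real.log 2)

/-- `ω` is `(C,τ)`-Diophantine: `|qω − p| ≥ C/q^τ` for all integers `p` and positive integers
`q`. -/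
def IsDiophantine (C τ ω : ℝ) : Prop :=
  ∀ p q : ℤ, 0 < q → C / (q : ℝ) ^ τ ≤ |(q : ℝ) * ω - (p : ℝ)|

end

noncomputable section

/-- `M'_n(ω) = (1 + a_1(ω)) ⋯ (1 + a_n(ω))`. -/
def Mprod' (ω : ℝ) (n : ℕ) : ℝ := ∏ j ∈ Finset.Icc 1 n, (1 + (pq ω j : ℝ))

/-- `κ' = ∫₀¹ log(1+⌊1/x⌋)/((1+x) log 2) dx`. -/
def kappa' : ℝ := ∫ x in Ioo (0 : ℝ) 1, Real.log (1 + (⌊1 / x⌋ : ℝ)) / ((1 + x) * Real.log 2)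

end


noncomputable section CFAux

/-- `F k y = 1/(k+y)`. -/
def FF (k : ℕ) (y : ℝ) : ℝ := 1 / ((k : ℝ) + y)

lemma FF_mem_Icc {k : ℕ} (hk : 1 ≤ k) {y : ℝ} (hy : y ∈ Icc (0:ℝ) 1) :
    FF k y ∈ Icc (0:ℝ) 1 := by
  have hk' : (1:ℝ) ≤ (k:ℝ) := by exact_mod_cast hk
  have h0 : (0:ℝ) < (k:ℝ) + y := by linarith [hy.1]
  constructor
  · exact le_of_lt (div_pos one_pos h0)
  · rw [FF, div_le_one h0]; linarith [hy.1]

lemma FF_mem_Ioo_of_two {k : ℕ} (hk : 2 ≤ k) {y : ℝ} (hy : y ∈ Icc (0:ℝ) 1) :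
    FF k y ∈ Ioo (0:ℝ) 1 := by
  have hk' : (2:ℝ) ≤ (k:ℝ) := by exact_mod_cast hk
  have h0 : (0:ℝ) < (k:ℝ) + y := by linarith [hy.1]
  constructor
  · exact div_pos one_pos h0
  · rw [FF, div_lt_one h0]; linarith [hy.1]

lemma FF_mem_Ioo {k : ℕ} (hk : 1 ≤ k) {y : ℝ} (hy : y ∈ Ioo (0:ℝ) 1) :
    FF k y ∈ Ioo (0:ℝ) 1 := by
  have hk' : (1:ℝ) ≤ (k:ℝ) := by exact_mod_cast hk
  have h0 : (0:ℝ) < (k:ℝ) + y := by linarith [hy.1]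
  constructor
  · exact div_pos one_pos h0
  · rw [FF, div_lt_one h0]; linarith [hy.1]

lemma FF_continuousOn (k : ℕ) (hk : 1 ≤ k) : ContinuousOn (FF k) (Icc (0:ℝ) 1) := by
  apply ContinuousOn.div continuousOn_const (by fun_prop)
  intro y hy
  have hk' : (1:ℝ) ≤ (k:ℝ) := by exact_mod_cast hk
  have : (0:ℝ) < (k:ℝ) + y := by linarith [hy.1]
  exact ne_of_gt this

/-- Composition `F_k ∘ F_{k+1} ∘ ⋯ ∘ F_{k+m}`. -/
def compF : ℕ → ℕ → ℝ → ℝ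
  | k, 0 => FF k
  | k, (m+1) => FF k ∘ compF (k+1) m

/-- `A k m` = image of `[0,1]` under `F_k ∘ ⋯ ∘ F_{k+m}`. -/
def AS (k m : ℕ) : Set ℝ := compF k m '' Icc 0 1

lemma AS_succ (k m : ℕ) : AS k (m+1) = FF k '' AS (k+1) m := by
  show (FF k ∘ compF (k+1) m) '' Icc 0 1 = _
  rw [Set.image_comp]
  rfl

lemma AS_zero (k : ℕ) : AS k 0 = FF k '' Icc 0 1 := rfl

lemma AS_subset_Icc : ∀ m k, 1 ≤ k → AS k m ⊆ Icc (0:ℝ) 1 := by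
  intro m
  induction m with
  | zero =>
    intro k hk x hx
    obtain ⟨y, hy, rfl⟩ := hx
    exact FF_mem_Icc hk hy
  | succ m ih =>
    intro k hk x hx
    rw [AS_succ] at hx
    obtain ⟨y, hy, rfl⟩ := hx
    exact FF_mem_Icc hk (ih (k+1) (by omega) hy)

lemma AS_nonempty (k m : ℕ) : (AS k m).Nonempty := by
  apply Nonempty.image
  exact ⟨0, by constructor <;> norm_num⟩

lemma AS_compact : ∀ m k, 1 ≤ k → IsCompact (AS k m) := by
  intro m
  induction m with
  | zero =>
    intro k hk
    exact (isCompact_Icc).image_of_continuousOn (FF_continuousOn k hk)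
  | succ m ih =>
    intro k hk
    rw [AS_succ]
    exact (ih (k+1) (by omega)).image_of_continuousOn
      ((FF_continuousOn k hk).mono (AS_subset_Icc m (k+1) (by omega)))

lemma AS_anti_step : ∀ m k, 1 ≤ k → AS k (m+1) ⊆ AS k m := by
  intro m
  induction m with
  | zero =>
    intro k hk
    rw [AS_succ, AS_zero]
    exact image_mono (AS_subset_Icc 0 (k+1) (by omega))
  | succ m ih =>
    intro k hk
    rw [AS_succ k (m+1), AS_succ k m]
    exact image_mono (ih (k+1) (by omega))

lemma AS_anti (k : ℕ) (hk : 1 ≤ k) : Antitone (AS k) := by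
  apply antitone_nat_of_succ_le
  intro m
  exact AS_anti_step m k hk

/-- Intersection of nested images. -/
def SS (k : ℕ) : Set ℝ := ⋂ m, AS k m

lemma SS_nonempty (k : ℕ) (hk : 1 ≤ k) : (SS k).Nonempty := by
  apply IsCompact.nonempty_iInter_of_directed_nonempty_isCompact_isClosed
  · exact (AS_anti k hk).directed_ge
  · exact fun m => AS_nonempty k m
  · exact fun m => AS_compact m k hk
  · exact fun m => (AS_compact m k hk).isClosed

lemma SS_mem_Ioo {k : ℕ} (hk : 1 ≤ k) {x : ℝ} (hx : x ∈ SS k) : x ∈ Ioo (0:ℝ) 1 := by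
  have h1 : x ∈ AS k 1 := mem_iInter.mp hx 1
  rw [AS_succ, AS_zero] at h1
  obtain ⟨y, ⟨t, ht, rfl⟩, rfl⟩ := h1
  exact FF_mem_Ioo hk (FF_mem_Ioo_of_two (by omega) ht)

lemma SS_step {k : ℕ} (hk : 1 ≤ k) {x : ℝ} (hx : x ∈ SS k) :
    (1/x - (k:ℝ)) ∈ SS (k+1) ∧ x = FF k (1/x - (k:ℝ)) := by
  have hxI := SS_mem_Ioo hk hx
  have hx0 : x ≠ 0 := ne_of_gt hxI.1
  have key : ∀ m, (1/x - (k:ℝ)) ∈ AS (k+1) m := by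
    intro m
    have h1 : x ∈ AS k (m+1) := mem_iInter.mp hx (m+1)
    rw [AS_succ] at h1
    obtain ⟨z, hz, hxz⟩ := h1
    have hzI : z ∈ Icc (0:ℝ) 1 := AS_subset_Icc m (k+1) (by omega) hz
    have hk' : (1:ℝ) ≤ (k:ℝ) := by exact_mod_cast hk
    have hd : (0:ℝ) < (k:ℝ) + z := by linarith [hzI.1]
    have : 1/x = (k:ℝ) + z := by
      rw [← hxz, FF]; rw [one_div_one_div]
    have : z = 1/x - (k:ℝ) := by linarith
    rwa [← this]
  refine ⟨mem_iInter.mpr key, ?_⟩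
  -- x = FF k (1/x - k)
  have hk' : (1:ℝ) ≤ (k:ℝ) := by exact_mod_cast hk
  have h1 : (1/x - (k:ℝ)) ∈ AS (k+1) 0 := key 0
  have hzI : (1/x - (k:ℝ)) ∈ Icc (0:ℝ) 1 := AS_subset_Icc 0 (k+1) (by omega) h1
  rw [FF]
  have : (k:ℝ) + (1/x - (k:ℝ)) = 1/x := by ring
  rw [this, one_div_one_div]

/-- The sequence of tails, as a dependent recursion. -/
def Wt : (n : ℕ) → {x : ℝ // x ∈ SS (n+1)}
  | 0 => ⟨(SS_nonempty 1 le_rfl).choose, (SS_nonempty 1 le_rfl).choose_spec⟩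
  | (n+1) => ⟨1/(Wt n).1 - ((n+1 : ℕ):ℝ), (SS_step (by omega) (Wt n).2).1⟩

/-- `W k` = the `k`-th tail `ω_k` (for `k ≥ 1`); `W k = 1/(k + W (k+1))`. -/
def W (k : ℕ) : ℝ := (Wt (k-1)).1

lemma Wt_mem (j : ℕ) : (Wt j).1 ∈ SS (j+1) := (Wt j).2

lemma W_eq (j : ℕ) : W (j+1) = (Wt j).1 := rfl

lemma W_mem_Ioo {k : ℕ} (hk : 1 ≤ k) : W k ∈ Ioo (0:ℝ) 1 := by
  obtain ⟨j, rfl⟩ : ∃ j, k = j + 1 := ⟨k - 1, by omega⟩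
  exact SS_mem_Ioo (by omega) (Wt_mem j)

lemma W_succ_eq (j : ℕ) : W (j+2) = 1 / W (j+1) - ((j+1 : ℕ):ℝ) := rfl

lemma W_rec {k : ℕ} (hk : 1 ≤ k) : W k = 1 / ((k:ℝ) + W (k+1)) := by
  obtain ⟨j, rfl⟩ : ∃ j, k = j + 1 := ⟨k - 1, by omega⟩
  have h2 := (SS_step (k := j+1) (by omega) (Wt_mem j)).2
  rw [FF] at h2
  rw [W_succ_eq j, W_eq j]
  convert h2 using 3

end CFAux

noncomputable section Gauss

lemma W_pos {k : ℕ} (hk : 1 ≤ k) : 0 < W k := (W_mem_Ioo hk).1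

lemma one_div_W {k : ℕ} (hk : 1 ≤ k) : 1 / W k = (k:ℝ) + W (k+1) := by
  rw [W_rec hk, one_div_one_div]

lemma floor_one_div_W {k : ℕ} (hk : 1 ≤ k) : ⌊1 / W k⌋ = (k:ℤ) := by
  rw [one_div_W hk]
  have h := W_mem_Ioo (k := k+1) (by omega)
  rw [Int.floor_eq_iff]
  push_cast
  constructor <;> [linarith [h.1]; linarith [h.2]]

lemma gaussMap_W {k : ℕ} (hk : 1 ≤ k) : gaussMap (W k) = W (k+1) := by
  rw [gaussMap, floor_one_div_W hk, one_div_W hk]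
  push_cast
  ring

lemma gaussMap_iter_W (n : ℕ) : gaussMap^[n] (W 1) = W (n+1) := by
  induction n with
  | zero => simp
  | succ n ih =>
    rw [Function.iterate_succ_apply', ih, gaussMap_W (by omega)]

lemma pq_W {n : ℕ} (hn : 1 ≤ n) : pq (W 1) n = (n : ℤ) := by
  obtain ⟨m, rfl⟩ : ∃ m, n = m + 1 := ⟨n - 1, by omega⟩
  rw [pq]
  have : m + 1 - 1 = m := by omega
  rw [this, gaussMap_iter_W m, floor_one_div_W (by omega)]

lemma prod_Icc_id (n : ℕ) : ∏ i ∈ Finset.Icc 1 n, i = n.factorial := by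
  induction n with
  | zero => simp
  | succ n ih =>
    rw [Finset.prod_Icc_succ_top (by omega), ih, Nat.factorial_succ]
    ring

lemma prod_Icc_succ_id (n : ℕ) : ∏ i ∈ Finset.Icc 1 n, (i+1) = (n+1).factorial := by
  induction n with
  | zero => simp
  | succ n ih =>
    rw [Finset.prod_Icc_succ_top (by omega), ih, Nat.factorial_succ (n+1)]
    ring

lemma Mprod_W (n : ℕ) : Mprod (W 1) n = (n.factorial : ℝ) := by
  rw [Mprod]
  have h1 : ∀ j ∈ Finset.Icc 1 n, ((pq (W 1) j : ℤ) : ℝ) = ((j : ℕ) : ℝ) := by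
    intro j hj
    rw [pq_W (Finset.mem_Icc.mp hj).1]
    push_cast; ring
  rw [Finset.prod_congr rfl h1, ← Nat.cast_prod, prod_Icc_id]

lemma Mprod'_W (n : ℕ) : Mprod' (W 1) n = ((n+1).factorial : ℝ) := by
  rw [Mprod']
  have h1 : ∀ j ∈ Finset.Icc 1 n, (1 + (pq (W 1) j : ℝ)) = (((j+1) : ℕ) : ℝ) := by
    intro j hj
    rw [pq_W (Finset.mem_Icc.mp hj).1]
    push_cast; ring
  rw [Finset.prod_congr rfl h1, ← Nat.cast_prod, prod_Icc_succ_id]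

/-- No infinite descent in ℕ. -/
lemma no_descent (f : ℕ → ℕ) (h : ∀ n, f (n+1) < f n) : False := by
  have key : ∀ n, f n + n ≤ f 0 := by
    intro n
    induction n with
    | zero => simp
    | succ n ih => have := h n; omega
  have := key (f 0 + 1)
  omega

/-- The rational tails, if `W 1` were rational. -/
def ratTail (r0 : ℚ) : ℕ → ℚ
  | 0 => r0
  | (j+1) => 1/(ratTail r0 j) - ((j:ℚ)+1)

lemma irrational_W1 : Irrational (W 1) := by
  rintro ⟨r0, hr0⟩
  set s : ℕ → ℚ := ratTail r0 with hs
  have hss : ∀ j, s (j+1) = 1/(s j) - ((j:ℚ)+1) := fun j => rfl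
  have hcast : ∀ j, (s j : ℝ) = W (j+1) := by
    intro j
    induction j with
    | zero => exact hr0
    | succ j ih =>
      have hW := W_succ_eq j
      rw [hss j]
      push_cast
      rw [ih, hW]
      push_cast
      ring
  have hpos : ∀ j, 0 < s j := by
    intro j
    have h := (W_mem_Ioo (k := j+1) (by omega)).1
    rw [← hcast j] at h
    exact_mod_cast h
  have hlt1 : ∀ j, s j < 1 := by
    intro j
    have h := (W_mem_Ioo (k := j+1) (by omega)).2
    rw [← hcast j] at h
    exact_mod_cast h
  have hnumpos : ∀ j, 0 < (s j).num := fun j => Rat.num_pos.mpr (hpos j)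
  have hnumlt : ∀ j, (s j).num < ((s j).den : ℤ) := by
    intro j
    have h := hlt1 j
    rw [← Rat.num_div_den (s j), div_lt_one (by exact_mod_cast (s j).pos)] at h
    exact_mod_cast h
  have hdesc : ∀ j, ((s (j+1)).den : ℤ) ≤ (s j).num := by
    intro j
    have hne : ((s j).num : ℚ) ≠ 0 := by exact_mod_cast (hnumpos j).ne'
    have hrep : s (j+1) = ((((s j).den : ℤ) - ((j:ℤ)+1) * (s j).num : ℤ) : ℚ) / (((s j).num : ℤ) : ℚ) := by
      rw [hss j]
      nth_rewrite 1 [← Rat.num_div_den (s j)]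
      rw [one_div_div]
      push_cast
      field_simp
    have hdvd : ((s (j+1)).den : ℤ) ∣ (s j).num := by
      rw [hrep, ← Rat.divInt_eq_div]
      exact Rat.den_dvd _ _
    exact Int.le_of_dvd (hnumpos j) hdvd
  have hdescN : ∀ j, (s (j+1)).den < (s j).den := by
    intro j
    have h1 := hdesc j
    have h2 := hnumlt j
    omega
  exact no_descent (fun j => (s j).den) hdescN

end Gauss

noncomputable section Dioph

/-- Denominators of the convergents of `[0;1,2,3,…]`. -/
def qd : ℕ → ℤ
  | 0 => 1
  | 1 => 1
  | (n+2) => (n+2) * qd (n+1) + qd n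

/-- Numerators of the convergents of `[0;1,2,3,…]`. -/
def pd : ℕ → ℤ
  | 0 => 0
  | 1 => 1
  | (n+2) => (n+2) * pd (n+1) + pd n

lemma qd_zero : qd 0 = 1 := rfl
lemma qd_one : qd 1 = 1 := rfl
lemma qd_succ (n : ℕ) : qd (n+2) = (n+2) * qd (n+1) + qd n := by rw [qd]
lemma pd_zero : pd 0 = 0 := rfl
lemma pd_one : pd 1 = 1 := rfl
lemma pd_succ (n : ℕ) : pd (n+2) = (n+2) * pd (n+1) + pd n := by rw [pd]

lemma one_le_qd : ∀ n, 1 ≤ qd n := by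
  intro n
  induction n using Nat.twoStepInduction with
  | zero => norm_num [qd_zero]
  | one => norm_num [qd_one]
  | more n ih1 ih2 =>
    rw [qd_succ]
    have : (1:ℤ) ≤ (n:ℤ) + 2 := by omega
    nlinarith

lemma qd_mono (n : ℕ) : qd n ≤ qd (n+1) := by
  cases n with
  | zero => norm_num [qd_zero, qd_one]
  | succ n =>
    rw [qd_succ]
    have h1 := one_le_qd n
    have h2 := one_le_qd (n+1)
    have : (0:ℤ) ≤ (n:ℤ) := by omega
    nlinarith

lemma le_qd (n : ℕ) : (n:ℤ) ≤ qd n := by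
  cases n with
  | zero => norm_num [qd_zero]
  | succ n =>
    cases n with
    | zero => norm_num [qd_one]
    | succ n =>
      rw [qd_succ]
      have h1 := one_le_qd n
      have h2 := one_le_qd (n+1)
      push_cast
      nlinarith

lemma qd_succ_le (n : ℕ) : qd (n+1) ≤ ((n:ℤ)+2) * qd n := by
  cases n with
  | zero => norm_num [qd_zero, qd_one]
  | succ n =>
    rw [qd_succ]
    have h1 := qd_mono n
    have h2 := one_le_qd n
    push_cast
    nlinarith

/-- The fundamental identity relating `W 1` to the convergents and the tails. -/
lemma key_id : ∀ n : ℕ,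
    ((qd (n+1) : ℝ) + (qd n : ℝ) * W (n+2)) * W 1 = (pd (n+1) : ℝ) + (pd n : ℝ) * W (n+2) := by
  intro n
  induction n with
  | zero =>
    have h := W_rec (k := 1) le_rfl
    have h2 : (0:ℝ) < 1 + W 2 := by
      have := (W_mem_Ioo (k := 2) (by omega)).1
      linarith
    rw [qd_one, qd_zero, pd_one, pd_zero]
    push_cast
    rw [h]
    field_simp
    push_cast; rw [div_self (ne_of_gt h2)]; ring
  | succ n ih =>
    have hrec := W_rec (k := n+2) (by omega)
    have hpos : (0:ℝ) < ((n:ℝ)+2) + W (n+3) := by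
      have h1 := (W_mem_Ioo (k := n+3) (by omega)).1
      have : (0:ℝ) ≤ (n:ℝ) := by positivity
      linarith
    have hW2 : W (n+2) = 1 / (((n:ℝ)+2) + W (n+3)) := by
      rw [hrec]; push_cast; norm_num
    rw [hW2] at ih
    have hne : (((n:ℝ)+2) + W (n+3)) ≠ 0 := ne_of_gt hpos
    field_simp at ih
    rw [show n+1+1 = n+2 from rfl, qd_succ, pd_succ]
    push_cast
    nlinarith [ih]

lemma det_id : ∀ n : ℕ, pd (n+1) * qd n - pd n * qd (n+1) = (-1)^n := by
  intro n
  induction n with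
  | zero => norm_num [pd_one, pd_zero, qd_one, qd_zero]
  | succ n ih =>
    rw [qd_succ, pd_succ, pow_succ]
    linear_combination (-1 : ℤ) * ih

/-- `e n = q_n ω - p_n`. -/
def ee (n : ℕ) : ℝ := (qd n : ℝ) * W 1 - (pd n : ℝ)

lemma Dd_pos (n : ℕ) : (0:ℝ) < (qd (n+1) : ℝ) + (qd n : ℝ) * W (n+2) := by
  have h1 : (1:ℝ) ≤ (qd (n+1) : ℝ) := by exact_mod_cast one_le_qd (n+1)
  have h2 : (1:ℝ) ≤ (qd n : ℝ) := by exact_mod_cast one_le_qd n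
  have h3 := (W_mem_Ioo (k := n+2) (by omega)).1
  nlinarith

lemma ee_eq (n : ℕ) : ee n * ((qd (n+1) : ℝ) + (qd n : ℝ) * W (n+2)) = (-1)^n := by
  have h1 := key_id n
  have h2 := det_id n
  have h2' : (pd (n+1) : ℝ) * (qd n : ℝ) - (pd n : ℝ) * (qd (n+1) : ℝ) = (-1)^n := by
    exact_mod_cast congrArg (fun z : ℤ => (z : ℝ)) h2
  rw [ee]
  linear_combination (qd n : ℝ) * h1 + h2'

lemma abs_ee (n : ℕ) : |ee n| = 1 / ((qd (n+1) : ℝ) + (qd n : ℝ) * W (n+2)) := by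
  have h := ee_eq n
  have hD := Dd_pos n
  have : ee n = (-1)^n / ((qd (n+1) : ℝ) + (qd n : ℝ) * W (n+2)) := by
    field_simp
    linarith [h]
  rw [this, abs_div, abs_pow, abs_neg, abs_one, one_pow, abs_of_pos hD]

lemma abs_ee_ge (n : ℕ) : 1 / ((qd (n+1) : ℝ) + (qd n : ℝ)) ≤ |ee n| := by
  rw [abs_ee n]
  have hD := Dd_pos n
  have h2 : (1:ℝ) ≤ (qd n : ℝ) := by exact_mod_cast one_le_qd n
  have h3 := (W_mem_Ioo (k := n+2) (by omega))
  apply one_div_le_one_div_of_le hD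
  nlinarith [h3.2]

lemma ee_ne (n : ℕ) : ee n ≠ 0 := by
  intro h
  have := ee_eq n
  rw [h, zero_mul] at this
  have : ((-1:ℝ))^n ≠ 0 := by positivity
  simp_all

lemma ee_mul_neg (n : ℕ) : ee n * ee (n+1) < 0 := by
  have h1 := ee_eq n
  have h2 := ee_eq (n+1)
  have d1 := Dd_pos n
  have d2 := Dd_pos (n+1)
  have hsign : ((-1:ℝ))^n * ((-1:ℝ))^(n+1) = -1 := by
    rw [pow_succ, ← mul_assoc, ← pow_add, ← two_mul, pow_mul]
    norm_num
  have hP : (ee n * ee (n+1)) * (((qd (n+1) : ℝ) + (qd n : ℝ) * W (n+2)) *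
      ((qd (n+1+1) : ℝ) + (qd (n+1) : ℝ) * W (n+1+2))) = -1 := by
    linear_combination (ee (n+1) * ((qd (n+1+1) : ℝ) + (qd (n+1) : ℝ) * W (n+1+2))) * h1
      + ((-1:ℝ)^n) * h2 + hsign
  nlinarith [hP, mul_pos d1 d2]

lemma abs_le_abs_add_of_mul_nonneg {a b : ℝ} (h : 0 ≤ a * b) : |a| ≤ |a + b| := by
  rcases le_total 0 a with ha | ha <;> rcases le_total 0 b with hb | hb
  · rw [abs_of_nonneg ha, abs_of_nonneg (by linarith)]; linarith
  · have h0 : a * b = 0 := le_antisymm (mul_nonpos_of_nonneg_of_nonpos ha hb) h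
    rcases mul_eq_zero.mp h0 with h0 | h0
    · rw [h0, abs_zero]; exact abs_nonneg _
    · rw [h0, add_zero]
  · have h0 : a * b = 0 := le_antisymm (mul_nonpos_of_nonpos_of_nonneg ha hb) h
    rcases mul_eq_zero.mp h0 with h0 | h0
    · rw [h0, abs_zero]; exact abs_nonneg _
    · rw [h0, add_zero]
  · rw [abs_of_nonpos ha, abs_of_nonpos (by linarith)]; linarith

end Dioph

noncomputable section Main

lemma qd_interval (q : ℤ) (hq : 0 < q) : ∃ n : ℕ, qd n ≤ q ∧ q < qd (n+1) := by
  classical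
  have hex : ∃ m, q < qd m := by
    refine ⟨q.toNat + 1, ?_⟩
    have h := le_qd (q.toNat + 1)
    have : ((q.toNat + 1 : ℕ) : ℤ) = q + 1 := by omega
    omega
  obtain ⟨n, hn⟩ : ∃ n, Nat.find hex = n + 1 := by
    have hm0 : Nat.find hex ≠ 0 := by
      intro h
      have := Nat.find_spec hex
      rw [h, qd_zero] at this
      omega
    exact ⟨Nat.find hex - 1, by omega⟩
  refine ⟨n, ?_, ?_⟩
  · have := Nat.find_min hex (show n < Nat.find hex by omega)
    omega
  · have := Nat.find_spec hex
    rwa [hn] at this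

lemma dioph_W1 : ∀ p q : ℤ, 0 < q → (1/6 : ℝ) / ((q:ℝ) * (q:ℝ)) ≤ |(q:ℝ) * W 1 - (p:ℝ)| := by
  intro p q hq
  obtain ⟨n, hn2, hn1⟩ := qd_interval q hq
  obtain ⟨ε, hεdef⟩ : ∃ ε : ℤ, ε = (-1)^n := ⟨_, rfl⟩
  have hee : ε * ε = 1 := by
    rw [hεdef, ← pow_add, ← two_mul, pow_mul]
    norm_num
  obtain ⟨x, hxdef⟩ : ∃ x : ℤ, x = ε * (q * pd (n+1) - p * qd (n+1)) := ⟨_, rfl⟩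
  obtain ⟨y, hydef⟩ : ∃ y : ℤ, y = ε * (p * qd n - q * pd n) := ⟨_, rfl⟩
  have hdet : pd (n+1) * qd n - pd n * qd (n+1) = ε := by rw [hεdef]; exact det_id n
  have hq' : x * qd n + y * qd (n+1) = q := by
    rw [hxdef, hydef]
    linear_combination (ε * q) * hdet + q * hee
  have hp' : x * pd n + y * pd (n+1) = p := by
    rw [hxdef, hydef]
    linear_combination (ε * p) * hdet + p * hee
  clear hxdef hydef hdet hee hεdef
  have hq2 : (x:ℝ) * (qd n : ℝ) + (y:ℝ) * (qd (n+1) : ℝ) = (q:ℝ) := by exact_mod_cast hq'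
  have hp2 : (x:ℝ) * (pd n : ℝ) + (y:ℝ) * (pd (n+1) : ℝ) = (p:ℝ) := by exact_mod_cast hp'
  have hcomb : (q:ℝ) * W 1 - (p:ℝ) = (x:ℝ) * ee n + (y:ℝ) * ee (n+1) := by
    rw [ee, ee]
    linear_combination hp2 - (W 1) * hq2
  have hqd1 := one_le_qd n
  have hqd2 := one_le_qd (n+1)
  -- |ee n| ≤ |q W1 - p|
  have key : |ee n| ≤ |(q:ℝ) * W 1 - (p:ℝ)| := by
    rw [hcomb]
    by_cases hy : y = 0
    · have hx0 : x ≠ 0 := by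
        intro hx
        rw [hx, hy] at hq'
        simp at hq'
        omega
      have hx1 : (1:ℝ) ≤ |(x:ℝ)| := by
        have : 1 ≤ |x| := Int.one_le_abs hx0
        exact_mod_cast this
      rw [hy]
      push_cast
      rw [zero_mul, add_zero, abs_mul]
      nlinarith [abs_nonneg (ee n)]
    · by_cases hx : x = 0
      · exfalso
        rw [hx, zero_mul, zero_add] at hq'
        have hy1 : 1 ≤ y := by nlinarith
        nlinarith
      · have hxy : x * y < 0 := by
          rcases lt_trichotomy (x*y) 0 with h | h | h
          · exact h
          · exact absurd (mul_eq_zero.mp h) (by push_neg; exact ⟨hx, hy⟩)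
          · exfalso
            rcases lt_trichotomy x 0 with hx' | hx' | hx'
            · have hy' : y < 0 := by nlinarith
              nlinarith
            · exact hx hx'
            · have hy' : 0 < y := by nlinarith
              nlinarith
        have hxyR : ((x:ℝ)) * (y:ℝ) < 0 := by exact_mod_cast hxy
        have hsame : 0 ≤ ((x:ℝ) * ee n) * ((y:ℝ) * ee (n+1)) := by
          have h2 := ee_mul_neg n
          nlinarith
        have h3 := abs_le_abs_add_of_mul_nonneg hsame
        have hx1 : (1:ℝ) ≤ |(x:ℝ)| := by
          have : 1 ≤ |x| := Int.one_le_abs hx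
          exact_mod_cast this
        calc |ee n| ≤ |(x:ℝ)| * |ee n| := by nlinarith [abs_nonneg (ee n)]
          _ = |(x:ℝ) * ee n| := (abs_mul _ _).symm
          _ ≤ _ := h3
  -- numeric chain
  have hsum_pos : (0:ℝ) < (qd (n+1) : ℝ) + (qd n : ℝ) := by
    have h1 : (1:ℝ) ≤ (qd (n+1) : ℝ) := by exact_mod_cast hqd2
    have h2 : (1:ℝ) ≤ (qd n : ℝ) := by exact_mod_cast hqd1
    linarith
  have hchain : (qd (n+1) : ℤ) + qd n ≤ 6 * q * q := by
    have h1 := qd_succ_le n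
    have h2 := le_qd n
    have h3 : (n:ℤ) + 3 ≤ 6 * qd n := by linarith
    have h4 : (qd (n+1) : ℤ) + qd n ≤ ((n:ℤ) + 3) * qd n := by nlinarith
    have h5 : ((n:ℤ) + 3) * qd n ≤ 6 * qd n * qd n := by nlinarith
    have h6 : (6:ℤ) * qd n * qd n ≤ 6 * q * q := by nlinarith
    linarith
  have hchainR : (qd (n+1) : ℝ) + (qd n : ℝ) ≤ 6 * (q:ℝ) * (q:ℝ) := by exact_mod_cast hchain
  have hfinal : (1/6 : ℝ) / ((q:ℝ) * (q:ℝ)) ≤ 1 / ((qd (n+1) : ℝ) + (qd n : ℝ)) := by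
    have hq0 : (0:ℝ) < (q:ℝ) := by exact_mod_cast hq
    rw [show (1/6 : ℝ)/((q:ℝ) * (q:ℝ)) = 1/(6 * (q:ℝ) * (q:ℝ)) by ring]
    apply one_div_le_one_div_of_le hsum_pos
    linarith
  calc (1/6 : ℝ) / ((q:ℝ) * (q:ℝ)) ≤ 1 / ((qd (n+1) : ℝ) + (qd n : ℝ)) := hfinal
    _ ≤ |ee n| := abs_ee_ge n
    _ ≤ _ := key

lemma exists_big (K : ℝ) (N : ℕ) : ∃ n, N ≤ n ∧ Real.exp (K * n) < (n.factorial : ℝ) := by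
  have h := FloorSemiring.tendsto_pow_div_factorial_atTop (Real.exp K) (K := ℝ)
  have h2 : ∀ᶠ n : ℕ in Filter.atTop, (Real.exp K)^n / (n.factorial : ℝ) < 1 :=
    h.eventually_lt_const one_pos
  obtain ⟨n, hn1, hn2⟩ := (h2.and (Filter.eventually_ge_atTop N)).exists
  refine ⟨n, hn2, ?_⟩
  have hfac : (0:ℝ) < (n.factorial : ℝ) := by exact_mod_cast n.factorial_pos
  rw [div_lt_one hfac] at hn1
  calc Real.exp (K * n) = Real.exp ((n:ℝ) * K) := by ring_nf
    _ = (Real.exp K)^n := Real.exp_nat_mul K n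
    _ < _ := hn1

end Main

theorem exists_diophantine_non_KL :
    ∃ (ω C τ : ℝ), Irrational ω ∧ ω ∈ Ioo (0 : ℝ) 1 ∧ 0 < C ∧ 1 ≤ τ ∧
      IsDiophantine C τ ω ∧
      (∀ T : ℝ, 0 < T → ∀ N : ℕ, ∃ n : ℕ, N ≤ n ∧
        Real.exp ((kappa + T) * n) < Mprod ω n) ∧
      (∀ T : ℝ, 0 < T → ∀ N : ℕ, ∃ n : ℕ, N ≤ n ∧
        Real.exp ((kappa' + T) * n) < Mprod' ω n) := by
  refine ⟨W 1, 1/6, 2, irrational_W1, W_mem_Ioo le_rfl, by norm_num, by norm_num, ?_, ?_, ?_⟩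
  · intro p q hq
    have h := dioph_W1 p q hq
    have hq0 : (0:ℝ) < (q:ℝ) := by exact_mod_cast hq
    have : (q:ℝ) ^ (2:ℝ) = (q:ℝ) * (q:ℝ) := by
      rw [show (2:ℝ) = ((2:ℕ):ℝ) by norm_num, Real.rpow_natCast]
      ring
    rw [this]
    exact h
  · intro T hT N
    obtain ⟨n, hn1, hn2⟩ := exists_big (kappa + T) N
    exact ⟨n, hn1, by rw [Mprod_W]; exact hn2⟩
  · intro T hT N
    obtain ⟨n, hn1, hn2⟩ := exists_big (kappa' + T) N
    refine ⟨n, hn1, ?_⟩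
    rw [Mprod'_W]
    have : (n.factorial : ℝ) ≤ ((n+1).factorial : ℝ) := by
      exact_mod_cast Nat.factorial_le (Nat.le_succ n)
    linarith
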